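/- Let A be an n×n matrix over a commutative ring and let Δ be its matrix of cofactors (so Δ_{ij} is the (i,j) cofactor of A). For any 2×2 minor M₂' of Δ obtained by selecting rows i₁ < i₂ and columns k₁ < k₂, one has M₂' = det(A) · (−1)^{i₁+i₂+k₁+k₂} · M₂^c, where M₂^c is the complementary minor of A obtained by deleting rows i₁, i₂ and columns k₁, k₂. -/

import Mathlib

open Equiv Matrix

variable {n : ℕ}

def jacobiPerm (i₁ : Fin (n + 2)) (i₂' : Fin (n + 1)) : Equiv.Perm (Fin (n + 2)) :=
  (Fin.cycleRange i₁)⁻¹ * Equiv.Perm.decomposeFin.symm (0, (Fin.cycleRange i₂')⁻¹)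

lemma jacobiPerm_zero (i₁ : Fin (n + 2)) (i₂' : Fin (n + 1)) :
    jacobiPerm i₁ i₂' 0 = i₁ := by
  simp [jacobiPerm, Equiv.Perm.mul_apply, Equiv.Perm.inv_def, Fin.cycleRange_symm_zero]

lemma jacobiPerm_succ (i₁ : Fin (n + 2)) (i₂' : Fin (n + 1)) (x : Fin (n + 1)) :
    jacobiPerm i₁ i₂' x.succ = i₁.succAbove ((Fin.cycleRange i₂')⁻¹ x) := by
  simp [jacobiPerm, Equiv.Perm.mul_apply, Equiv.Perm.inv_def,
    Equiv.Perm.decomposeFin_symm_apply_succ, Fin.cycleRange_symm_succ]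

lemma jacobiPerm_one (i₁ : Fin (n + 2)) (i₂' : Fin (n + 1)) :
    jacobiPerm i₁ i₂' 1 = i₁.succAbove i₂' := by
  rw [← Fin.succ_zero_eq_one, jacobiPerm_succ]
  simp [Equiv.Perm.inv_def, Fin.cycleRange_symm_zero]

lemma jacobiPerm_succ_succ (i₁ : Fin (n + 2)) (i₂' : Fin (n + 1)) (j : Fin n) :
    jacobiPerm i₁ i₂' j.succ.succ = i₁.succAbove (i₂'.succAbove j) := by
  rw [jacobiPerm_succ]
  simp [Equiv.Perm.inv_def, Fin.cycleRange_symm_succ]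

lemma sign_jacobiPerm (i₁ : Fin (n + 2)) (i₂' : Fin (n + 1)) :
    Equiv.Perm.sign (jacobiPerm i₁ i₂') = (-1) ^ ((i₁ : ℕ) + (i₂' : ℕ)) := by
  rw [jacobiPerm, _root_.map_mul, map_inv, Fin.sign_cycleRange,
    Equiv.Perm.decomposeFin.symm_sign, map_inv, Fin.sign_cycleRange]
  simp [pow_add]

def finTwoSum : Fin 2 ⊕ Fin n ≃ Fin (n + 2) :=
  finSumFinEquiv.trans (finCongr (by omega))

lemma finTwoSum_inl_zero : (finTwoSum (n := n)) (Sum.inl 0) = 0 := by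
  ext; simp [finTwoSum]

lemma finTwoSum_inl_one : (finTwoSum (n := n)) (Sum.inl 1) = 1 := by
  ext; simp [finTwoSum]

lemma finTwoSum_inr (j : Fin n) : (finTwoSum (n := n)) (Sum.inr j) = j.succ.succ := by
  ext
  simp [finTwoSum]

lemma jacobi_key {R : Type*} [CommRing R] {n : ℕ} (A : Matrix (Fin (n + 2)) (Fin (n + 2)) R)
    (i₁ k₁ : Fin (n + 2)) (i₂' k₂' : Fin (n + 1)) :
    A.det * (A.adjugate k₁ i₁ * A.adjugate (k₁.succAbove k₂') (i₁.succAbove i₂')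
        - A.adjugate (k₁.succAbove k₂') i₁ * A.adjugate k₁ (i₁.succAbove i₂'))
    = A.det ^ 2 * ((-1 : R) ^ ((i₁ : ℕ) + (i₂' : ℕ) + (k₁ : ℕ) + (k₂' : ℕ)) *
      (A.submatrix (fun j => i₁.succAbove (i₂'.succAbove j))
        (fun j => k₁.succAbove (k₂'.succAbove j))).det) := by
  set i₂ := i₁.succAbove i₂' with hi2
  set k₂ := k₁.succAbove k₂' with hk2
  set B := A.adjugate with hB
  set er : Fin n → Fin (n + 2) := fun j => i₁.succAbove (i₂'.succAbove j) with herdef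
  set ec : Fin n → Fin (n + 2) := fun j => k₁.succAbove (k₂'.succAbove j) with hecdef
  have hne12 : i₁ ≠ i₂ := Fin.ne_succAbove i₁ i₂'
  have hkne12 : k₁ ≠ k₂ := Fin.ne_succAbove k₁ k₂'
  have herne1 : ∀ j, er j ≠ i₁ := fun j => Fin.succAbove_ne i₁ _
  have herne2 : ∀ j, er j ≠ i₂ := fun j h =>
    Fin.succAbove_ne i₂' j (Fin.succAbove_right_injective h)
  have hecne1 : ∀ j, ec j ≠ k₁ := fun j => Fin.succAbove_ne k₁ _
  have hecne2 : ∀ j, ec j ≠ k₂ := fun j h =>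
    Fin.succAbove_ne k₂' j (Fin.succAbove_right_injective h)
  have hecinj : Function.Injective ec :=
    Fin.succAbove_right_injective.comp Fin.succAbove_right_injective
  set Er : Fin 2 ⊕ Fin n ≃ Fin (n + 2) := finTwoSum.trans (jacobiPerm i₁ i₂') with hErdef
  set Ec : Fin 2 ⊕ Fin n ≃ Fin (n + 2) := finTwoSum.trans (jacobiPerm k₁ k₂') with hEcdef
  have hEr0 : Er (Sum.inl 0) = i₁ := by
    rw [hErdef, Equiv.trans_apply, finTwoSum_inl_zero, jacobiPerm_zero]
  have hEr1 : Er (Sum.inl 1) = i₂ := by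
    rw [hErdef, Equiv.trans_apply, finTwoSum_inl_one, jacobiPerm_one]
  have hErr : ∀ j, Er (Sum.inr j) = er j := by
    intro j
    rw [hErdef, Equiv.trans_apply, finTwoSum_inr, jacobiPerm_succ_succ]
  have hEc0 : Ec (Sum.inl 0) = k₁ := by
    rw [hEcdef, Equiv.trans_apply, finTwoSum_inl_zero, jacobiPerm_zero]
  have hEc1 : Ec (Sum.inl 1) = k₂ := by
    rw [hEcdef, Equiv.trans_apply, finTwoSum_inl_one, jacobiPerm_one]
  have hEcr : ∀ j, Ec (Sum.inr j) = ec j := by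
    intro j
    rw [hEcdef, Equiv.trans_apply, finTwoSum_inr, jacobiPerm_succ_succ]
  set P : Matrix (Fin (n + 2)) (Fin (n + 2)) R :=
    ((1 : Matrix (Fin (n + 2)) (Fin (n + 2)) R).updateCol k₁
      (fun j => B j i₁)).updateCol k₂ (fun j => B j i₂) with hPdef
  have hPk1 : ∀ l, P l k₁ = B l i₁ := by
    intro l
    simp [hPdef, Matrix.updateCol_apply, hkne12]
  have hPk2 : ∀ l, P l k₂ = B l i₂ := by
    intro l
    simp [hPdef, Matrix.updateCol_apply]
  have hPec : ∀ l j, P l (ec j) = (1 : Matrix (Fin (n + 2)) (Fin (n + 2)) R) l (ec j) := by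
    intro l j
    simp [hPdef, Matrix.updateCol_apply, hecne1 j, hecne2 j]
  -- determinant of P
  have h1 : P.det = B k₁ i₁ * B k₂ i₂ - B k₁ i₂ * B k₂ i₁ := by
    rw [← det_submatrix_equiv_self Ec P]
    have hblock : P.submatrix Ec Ec =
        Matrix.fromBlocks !![B k₁ i₁, B k₁ i₂; B k₂ i₁, B k₂ i₂] 0
          (Matrix.of fun x y => P (Ec (Sum.inr x)) (Ec (Sum.inl y))) 1 := by
      ext a b
      rcases a with x | x <;> rcases b with y | y
      · fin_cases x <;> fin_cases y <;>
          simp [hEc0, hEc1, hPk1, hPk2]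
      · fin_cases x <;>
          simp [hEc0, hEc1, hEcr, hPec, Matrix.one_apply, (hecne1 y).symm, (hecne2 y).symm]
      · rfl
      · simp [hEcr, hPec, Matrix.one_apply, hecinj.eq_iff]
    rw [hblock, Matrix.det_fromBlocks_zero₁₂, Matrix.det_one, mul_one, Matrix.det_fin_two_of]
  -- entries of A * P
  have hAPcol1 : ∀ l, (A * P) l k₁ =
      A.det * (1 : Matrix (Fin (n + 2)) (Fin (n + 2)) R) l i₁ := by
    intro l
    rw [Matrix.mul_apply]
    simp_rw [hPk1]
    rw [← Matrix.mul_apply, hB, Matrix.mul_adjugate]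
    simp [Matrix.smul_apply]
  have hAPcol2 : ∀ l, (A * P) l k₂ =
      A.det * (1 : Matrix (Fin (n + 2)) (Fin (n + 2)) R) l i₂ := by
    intro l
    rw [Matrix.mul_apply]
    simp_rw [hPk2]
    rw [← Matrix.mul_apply, hB, Matrix.mul_adjugate]
    simp [Matrix.smul_apply]
  have hAPcolec : ∀ l j, (A * P) l (ec j) = A l (ec j) := by
    intro l j
    rw [Matrix.mul_apply]
    simp_rw [hPec]
    rw [← Matrix.mul_apply, Matrix.mul_one]
  -- block structure of (A*P) reindexed
  have h2 : (A * P).submatrix Er Ec =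
      Matrix.fromBlocks (A.det • 1)
        (Matrix.of fun x y => (A * P) (Er (Sum.inl x)) (Ec (Sum.inr y))) 0
        (A.submatrix er ec) := by
    ext a b
    rcases a with x | x <;> rcases b with y | y
    · fin_cases x <;> fin_cases y <;>
        simp [hEr0, hEr1, hEc0, hEc1, hAPcol1, hAPcol2, Matrix.one_apply,
          hne12, hne12.symm, Matrix.smul_apply]
    · rfl
    · fin_cases y <;>
        simp [hErr, hEc0, hEc1, hAPcol1, hAPcol2, Matrix.one_apply, herne1 x, herne2 x]
    · simp [hErr, hEcr, hAPcolec]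
  have h3 : ((A * P).submatrix Er Ec).det = A.det ^ 2 * (A.submatrix er ec).det := by
    rw [h2, Matrix.det_fromBlocks_zero₂₁, Matrix.det_smul, Matrix.det_one]
    norm_num
  -- relating to det (A * P) via permutation signs
  have h4 : ((A * P).submatrix Er Ec).det =
      ((Equiv.Perm.sign (jacobiPerm i₁ i₂') : ℤ) : R)
        * ((Equiv.Perm.sign (jacobiPerm k₁ k₂') : ℤ) : R) * (A * P).det := by
    have e1 : (A * P).submatrix Er Ec =
        (((A * P).submatrix id (jacobiPerm k₁ k₂')).submatrix (jacobiPerm i₁ i₂')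
          id).submatrix finTwoSum finTwoSum := rfl
    rw [e1, det_submatrix_equiv_self, Matrix.det_permute, Matrix.det_permute']
    push_cast
    ring
  have hsq : ∀ σ : Equiv.Perm (Fin (n + 2)),
      ((Equiv.Perm.sign σ : ℤ) : R) * ((Equiv.Perm.sign σ : ℤ) : R) = 1 := by
    intro σ
    rw [← Int.cast_mul, ← Units.val_mul, Int.units_mul_self, Units.val_one, Int.cast_one]
  have hsign : ((Equiv.Perm.sign (jacobiPerm i₁ i₂') : ℤ) : R)
      * ((Equiv.Perm.sign (jacobiPerm k₁ k₂') : ℤ) : R)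
      = (-1 : R) ^ ((i₁ : ℕ) + (i₂' : ℕ) + (k₁ : ℕ) + (k₂' : ℕ)) := by
    rw [sign_jacobiPerm, sign_jacobiPerm]
    push_cast
    ring
  have h5 : (A * P).det =
      (((Equiv.Perm.sign (jacobiPerm i₁ i₂') : ℤ) : R)
        * ((Equiv.Perm.sign (jacobiPerm k₁ k₂') : ℤ) : R))
        * (A.det ^ 2 * (A.submatrix er ec).det) := by
    calc (A * P).det
        = (((Equiv.Perm.sign (jacobiPerm i₁ i₂') : ℤ) : R)
            * ((Equiv.Perm.sign (jacobiPerm i₁ i₂') : ℤ) : R))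
          * ((((Equiv.Perm.sign (jacobiPerm k₁ k₂') : ℤ) : R)
            * ((Equiv.Perm.sign (jacobiPerm k₁ k₂') : ℤ) : R)) * (A * P).det) := by
          rw [hsq, hsq]; ring
      _ = (((Equiv.Perm.sign (jacobiPerm i₁ i₂') : ℤ) : R)
            * ((Equiv.Perm.sign (jacobiPerm k₁ k₂') : ℤ) : R))
          * (((Equiv.Perm.sign (jacobiPerm i₁ i₂') : ℤ) : R)
            * ((Equiv.Perm.sign (jacobiPerm k₁ k₂') : ℤ) : R) * (A * P).det) := by ring
      _ = _ := by rw [← h4, h3]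
  calc A.det * (B k₁ i₁ * B k₂ i₂ - B k₂ i₁ * B k₁ i₂)
      = A.det * P.det := by rw [h1]; ring
    _ = (A * P).det := (Matrix.det_mul A P).symm
    _ = _ := by rw [h5, hsign]; ring

lemma jacobi_cancel {R : Type*} [CommRing R] {n : ℕ} (A : Matrix (Fin (n + 2)) (Fin (n + 2)) R)
    (i₁ k₁ : Fin (n + 2)) (i₂' k₂' : Fin (n + 1)) :
    A.adjugate k₁ i₁ * A.adjugate (k₁.succAbove k₂') (i₁.succAbove i₂')
        - A.adjugate (k₁.succAbove k₂') i₁ * A.adjugate k₁ (i₁.succAbove i₂')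
    = A.det * ((-1 : R) ^ ((i₁ : ℕ) + (i₂' : ℕ) + (k₁ : ℕ) + (k₂' : ℕ)) *
      (A.submatrix (fun j => i₁.succAbove (i₂'.succAbove j))
        (fun j => k₁.succAbove (k₂'.succAbove j))).det) := by
  set X : Matrix (Fin (n + 2)) (Fin (n + 2)) (MvPolynomial (Fin (n + 2) × Fin (n + 2)) ℤ) :=
    mvPolynomialX (Fin (n + 2)) (Fin (n + 2)) ℤ with hX
  have hXdet : X.det ≠ 0 := det_mvPolynomialX_ne_zero _ ℤ
  have hgen : X.adjugate k₁ i₁ * X.adjugate (k₁.succAbove k₂') (i₁.succAbove i₂')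
        - X.adjugate (k₁.succAbove k₂') i₁ * X.adjugate k₁ (i₁.succAbove i₂')
      = X.det * ((-1) ^ ((i₁ : ℕ) + (i₂' : ℕ) + (k₁ : ℕ) + (k₂' : ℕ)) *
        (X.submatrix (fun j => i₁.succAbove (i₂'.succAbove j))
          (fun j => k₁.succAbove (k₂'.succAbove j))).det) := by
    apply mul_left_cancel₀ hXdet
    rw [jacobi_key X i₁ k₁ i₂' k₂']
    ring
  set f : MvPolynomial (Fin (n + 2) × Fin (n + 2)) ℤ →+* R :=
    MvPolynomial.eval₂Hom (Int.castRingHom R) (fun p => A p.1 p.2) with hf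
  have hXA : X.map f = A := by
    rw [hX, show ⇑f = MvPolynomial.eval₂ (Int.castRingHom R) (fun p => A p.1 p.2) from
      MvPolynomial.coe_eval₂Hom _ _]
    exact mvPolynomialX_map_eval₂ _ A
  have hadj : ∀ a b, f (X.adjugate a b) = A.adjugate a b := by
    intro a b
    have := congrFun (congrFun (RingHom.map_adjugate f X) a) b
    rwa [RingHom.mapMatrix_apply, RingHom.mapMatrix_apply, hXA] at this
  have hdet : f X.det = A.det := by
    rw [RingHom.map_det, RingHom.mapMatrix_apply, hXA]
  have hsubdet : f ((X.submatrix (fun j => i₁.succAbove (i₂'.succAbove j))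
        (fun j => k₁.succAbove (k₂'.succAbove j))).det)
      = (A.submatrix (fun j => i₁.succAbove (i₂'.succAbove j))
        (fun j => k₁.succAbove (k₂'.succAbove j))).det := by
    rw [RingHom.map_det, RingHom.mapMatrix_apply, ← submatrix_map, hXA]
  have := congrArg f hgen
  simpa [_root_.map_mul, map_sub, map_pow, map_neg, _root_.map_one, hadj, hdet, hsubdet] using this

/-- Jacobi's theorem for 2×2 minors of the cofactor matrix: if `Δ` is the
matrix of cofactors of `A`, then any 2×2 minor of `Δ` with rows `i₁ < i₂`
and columns `k₁ < k₂` equals `det A` times the signed complementary minor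
of `A` obtained by deleting rows `i₁, i₂` and columns `k₁, k₂`. -/
theorem jacobi_minor_cofactor {R : Type*} [CommRing R] (n : ℕ)
    (A : Matrix (Fin (n + 2)) (Fin (n + 2)) R)
    (Δ : Matrix (Fin (n + 2)) (Fin (n + 2)) R)
    (hΔ : ∀ i j, Δ i j = (-1 : R) ^ ((i : ℕ) + (j : ℕ)) *
      (A.submatrix i.succAbove j.succAbove).det)
    (i₁ i₂ k₁ k₂ : Fin (n + 2)) (hi : i₁ < i₂) (hk : k₁ < k₂)
    (er ec : Fin n → Fin (n + 2))
    (her : StrictMono er) (hec : StrictMono ec)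
    (hranger : Set.range er = ({i₁, i₂} : Set (Fin (n + 2)))ᶜ)
    (hrangec : Set.range ec = ({k₁, k₂} : Set (Fin (n + 2)))ᶜ) :
    Δ i₁ k₁ * Δ i₂ k₂ - Δ i₁ k₂ * Δ i₂ k₁ =
      A.det * (-1 : R) ^ ((i₁ : ℕ) + (i₂ : ℕ) + (k₁ : ℕ) + (k₂ : ℕ)) *
        (A.submatrix er ec).det := by
  have hilt : (i₁ : ℕ) < (i₂ : ℕ) := hi
  have hklt : (k₁ : ℕ) < (k₂ : ℕ) := hk
  set i₂' : Fin (n + 1) := ⟨(i₂ : ℕ) - 1, by omega⟩ with hi2'def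
  set k₂' : Fin (n + 1) := ⟨(k₂ : ℕ) - 1, by omega⟩ with hk2'def
  have hi2 : i₁.succAbove i₂' = i₂ := by
    rw [Fin.succAbove_of_le_castSucc]
    · ext; simp [hi2'def]; omega
    · rw [Fin.le_def]; simp [hi2'def]; omega
  have hk2 : k₁.succAbove k₂' = k₂ := by
    rw [Fin.succAbove_of_le_castSucc]
    · ext; simp [hk2'def]; omega
    · rw [Fin.le_def]; simp [hk2'def]; omega
  have hrangef : ∀ (a : Fin (n + 2)) (b' : Fin (n + 1)),
      Set.range (fun j : Fin n => a.succAbove (b'.succAbove j))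
        = ({a, a.succAbove b'} : Set (Fin (n + 2)))ᶜ := by
    intro a b'
    ext x
    simp only [Set.mem_range, Set.mem_compl_iff, Set.mem_insert_iff, Set.mem_singleton_iff,
      not_or]
    constructor
    · rintro ⟨j, rfl⟩
      exact ⟨Fin.succAbove_ne a _,
        fun h => Fin.succAbove_ne b' j (Fin.succAbove_right_injective h)⟩
    · rintro ⟨hx1, hx2⟩
      obtain ⟨y, hy⟩ := Fin.exists_succAbove_eq hx1
      have hyne : y ≠ b' := by
        rintro rfl
        exact hx2 hy.symm
      obtain ⟨z, hz⟩ := Fin.exists_succAbove_eq hyne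
      exact ⟨z, by rw [hz, hy]⟩
  have herf : er = fun j : Fin n => i₁.succAbove (i₂'.succAbove j) := by
    refine (StrictMono.range_inj (g := fun j : Fin n => i₁.succAbove (i₂'.succAbove j)) her
      ((Fin.strictMono_succAbove i₁).comp (Fin.strictMono_succAbove i₂'))).mp ?_
    rw [hranger, hrangef i₁ i₂', hi2]
  have hecf : ec = fun j : Fin n => k₁.succAbove (k₂'.succAbove j) := by
    refine (StrictMono.range_inj (g := fun j : Fin n => k₁.succAbove (k₂'.succAbove j)) hec
      ((Fin.strictMono_succAbove k₁).comp (Fin.strictMono_succAbove k₂'))).mp ?_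
    rw [hrangec, hrangef k₁ k₂', hk2]
  have hadj : ∀ i k : Fin (n + 2), (-1 : R) ^ ((i : ℕ) + (k : ℕ)) *
      (A.submatrix i.succAbove k.succAbove).det = A.adjugate k i := fun i k =>
    (Matrix.adjugate_fin_succ_eq_det_submatrix A k i).symm
  have hsignexp : (-1 : R) ^ ((i₁ : ℕ) + (i₂ : ℕ) + (k₁ : ℕ) + (k₂ : ℕ))
      = (-1 : R) ^ ((i₁ : ℕ) + (i₂' : ℕ) + (k₁ : ℕ) + (k₂' : ℕ)) := by
    have h : (i₁ : ℕ) + (i₂ : ℕ) + (k₁ : ℕ) + (k₂ : ℕ)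
        = ((i₁ : ℕ) + (i₂' : ℕ) + (k₁ : ℕ) + (k₂' : ℕ)) + 2 := by
      simp [hi2'def, hk2'def]; omega
    rw [h, pow_add]
    norm_num
  simp only [hΔ, hadj]
  rw [herf, hecf, hsignexp, ← hi2, ← hk2, jacobi_cancel A i₁ k₁ i₂' k₂']
  ring
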